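/- Let ε ∈ (0,1], μ ∈ ℝ, τ > 0 and set d⁺(τ) = i e^{-iμ²τ} ∫₀^τ e^{i(μ² + 1/ε²)θ} θ dθ. Then |d⁺(τ)| ≤ ε²(2ε² + τ). -/

import Mathlib

theorem d_plus_bound (ε : ℝ) (hε : 0 < ε) (hε1 : ε ≤ 1) (μ τ : ℝ) (hτ : 0 < τ) :
    ‖Complex.I * Complex.exp (-Complex.I * μ ^ 2 * τ)
        * ∫ θ : ℝ in (0)..τ, Complex.exp (Complex.I * (μ ^ 2 + 1 / ε ^ 2) * θ) * θ‖
      ≤ ε ^ 2 * (2 * ε ^ 2 + τ) := by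
  set a : ℝ := μ ^ 2 + 1 / ε ^ 2 with ha
  have ha0 : 0 < a := by positivity
  set c : ℂ := Complex.I * (a : ℂ) with hc
  have hc0 : c ≠ 0 := mul_ne_zero Complex.I_ne_zero (by exact_mod_cast ha0.ne')
  have habs_c : ‖c‖ = a := by
    rw [hc, norm_mul, Complex.norm_I, Complex.norm_real, Real.norm_eq_abs, one_mul, abs_of_pos ha0]
  clear_value c
  clear_value a
  -- closed form of the integral
  have hint : (∫ θ : ℝ in (0)..τ, Complex.exp (c * θ) * θ)
      = Complex.exp (c * τ) * (τ / c - 1 / c ^ 2) + 1 / c ^ 2 := by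
    have key : ∀ θ : ℝ, HasDerivAt (fun x : ℝ => Complex.exp (c * x) * ((x : ℂ) / c - 1 / c ^ 2))
        (Complex.exp (c * θ) * θ) θ := by
      intro θ
      have hg := ((((hasDerivAt_id (θ : ℂ)).const_mul c).cexp.mul
        (((hasDerivAt_id (θ : ℂ)).div_const c).sub_const (1 / c ^ 2)))).comp_ofReal
      convert hg using 1
      · rfl
      simp only [id_eq, mul_one]
      field_simp
      ring
    rw [intervalIntegral.integral_eq_sub_of_hasDerivAt (fun θ _ => key θ)
      (by apply Continuous.intervalIntegrable; continuity)]
    simp only [Complex.ofReal_zero, mul_zero, Complex.exp_zero, mul_one]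
    push_cast
    ring
  -- norms of unimodular factors
  have hpre : ‖Complex.I * Complex.exp (-Complex.I * μ ^ 2 * τ)‖ = 1 := by
    rw [norm_mul, Complex.norm_I, one_mul,
      show -Complex.I * (μ : ℂ) ^ 2 * τ = ((-(μ ^ 2 * τ) : ℝ) : ℂ) * Complex.I by
        push_cast; ring,
      Complex.norm_exp_ofReal_mul_I]
  have hexp : ‖Complex.exp (c * τ)‖ = 1 := by
    rw [show c * (τ : ℂ) = ((a * τ : ℝ) : ℂ) * Complex.I by rw [hc]; push_cast; ring,
      Complex.norm_exp_ofReal_mul_I]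
  have hinv : (1 : ℝ) / a ≤ ε ^ 2 := by
    rw [div_le_iff₀ ha0, ha]
    have h1 : ε ^ 2 * (μ ^ 2 + 1 / ε ^ 2) = (ε * μ) ^ 2 + 1 := by
      field_simp
    rw [h1]
    nlinarith [sq_nonneg (ε * μ)]
  have hbound : ‖Complex.exp (c * τ) * (τ / c - 1 / c ^ 2) + 1 / c ^ 2‖
      ≤ τ / a + 2 / a ^ 2 := by
    have h1 : ‖Complex.exp (c * τ) * (τ / c - 1 / c ^ 2)‖
        ≤ τ / a + 1 / a ^ 2 := by
      rw [norm_mul, hexp, one_mul]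
      calc ‖(τ : ℂ) / c - 1 / c ^ 2‖
          ≤ ‖(τ : ℂ) / c‖ + ‖(1 : ℂ) / c ^ 2‖ :=
            norm_sub_le _ _
        _ = τ / a + 1 / a ^ 2 := by
            rw [norm_div, norm_div, norm_one, norm_pow, habs_c, Complex.norm_real,
              Real.norm_eq_abs, abs_of_pos hτ]
    have h2 : ‖(1 : ℂ) / c ^ 2‖ = 1 / a ^ 2 := by
      rw [norm_div, norm_one, norm_pow, habs_c]
    calc ‖Complex.exp (c * τ) * (τ / c - 1 / c ^ 2) + 1 / c ^ 2‖
        ≤ ‖Complex.exp (c * τ) * (τ / c - 1 / c ^ 2)‖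
          + ‖(1 : ℂ) / c ^ 2‖ := norm_add_le _ _
      _ ≤ τ / a + 1 / a ^ 2 + 1 / a ^ 2 := by rw [h2]; linarith
      _ = τ / a + 2 / a ^ 2 := by ring
  rw [norm_mul, hpre, one_mul]
  have harg : ∀ θ : ℝ, Complex.I * ((μ : ℂ) ^ 2 + 1 / (ε : ℂ) ^ 2) * (θ : ℂ) = c * θ := by
    intro θ
    rw [hc, ha]
    push_cast
    ring
  simp_rw [harg]
  rw [hint]
  refine hbound.trans ?_
  have h1 : τ / a ≤ ε ^ 2 * τ := by
    rw [div_eq_mul_one_div]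
    calc τ * (1 / a) ≤ τ * ε ^ 2 := mul_le_mul_of_nonneg_left hinv hτ.le
      _ = ε ^ 2 * τ := mul_comm _ _
  have h2 : 2 / a ^ 2 ≤ 2 * ε ^ 4 := by
    have h3 : (1 : ℝ) / a ^ 2 ≤ ε ^ 4 := by
      have h4 := mul_le_mul hinv hinv (by positivity) (by positivity)
      have h5 : (1 : ℝ) / a * (1 / a) = 1 / a ^ 2 := by
        rw [div_mul_div_comm, one_mul, ← pow_two]
      have h6 : ε ^ 2 * ε ^ 2 = ε ^ 4 := by ring
      rw [h5, h6] at h4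
      exact h4
    calc 2 / a ^ 2 = 2 * (1 / a ^ 2) := by ring
      _ ≤ 2 * ε ^ 4 := by linarith
  have h7 : ε ^ 2 * (2 * ε ^ 2 + τ) = 2 * ε ^ 4 + ε ^ 2 * τ := by ring
  linarith
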